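/- arXiv:math/9806140 — 2 statements merged into one kernel-verified Lean document; each statement's English description precedes it below -/
import Mathlib

section
/- Let h ∈ ℝ and let B be a sesquilinear form on ℂ[z] satisfying B(l_i p, q) = B(p, l_{−i} q) for all i ∈ {−1, 0, 1} and all p, q ∈ ℂ[z]. Then B(z^n, z^m) = 0 for n ≠ m and B(z^n, z^n) = n!·(2h)(2h+1)⋯(2h+n−1)·B(1,1); in particular, such a contravariant form on the Verma module V_h is unique up to a scalar multiple. -/
open Polynomial

noncomputable section

/-- Multiplication by `X` (the operator `l₋₁`). -/
def mulX : Module.End ℂ (Polynomial ℂ) := LinearMap.mulLeft ℂ (X : Polynomial ℂ)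

/-- The differentiation operator `d/dz` (the operator `D`). -/
def der : Module.End ℂ (Polynomial ℂ) := Polynomial.derivative

/-- The generators `l₋₁, l₀, l₁` of `sl(2,ℂ)` acting on the Verma module `V_h ≅ ℂ[z]`. -/
def lgen (h : ℝ) (i : ℤ) : Module.End ℂ (Polynomial ℂ) :=
  if i = -1 then mulX
  else if i = 0 then mulX * der + (h : ℂ) • 1
  else if i = 1 then mulX * der * der + ((2 * h : ℝ) : ℂ) • der
  else 0

/-- The operator `F`, `F zⁿ = zⁿ⁺¹/(n+2h)`. -/
def Fop (h : ℝ) : Module.End ℂ (Polynomial ℂ) :=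
  (Polynomial.basisMonomials ℂ).constr ℂ fun n =>
    (((n : ℂ) + 2 * (h : ℂ))⁻¹) • (X : Polynomial ℂ) ^ (n + 1)

/-- The `q_R`-conformal symmetries `L_k` (`k ∈ ℤ`) acting on `ℂ[z]`. -/
def Lop (h : ℝ) (k : ℤ) : Module.End ℂ (Polynomial ℂ) :=
  (Polynomial.basisMonomials ℂ).constr ℂ fun n =>
    if 0 ≤ k then
      ((((n : ℂ) - (k : ℂ)) + ((k : ℂ) + 1) * (h : ℂ)) * (n.descFactorial k.toNat : ℂ)) •
        (X : Polynomial ℂ) ^ (n - k.toNat)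
    else
      (((n : ℂ) + (((-k).toNat : ℂ) + 1) * (h : ℂ)) /
          ∏ j ∈ Finset.range (-k).toNat, ((n : ℂ) + 2 * (h : ℂ) + (j : ℂ))) •
        (X : Polynomial ℂ) ^ (n + (-k).toNat)

/-- The deviations `A_{n,m} = [L_n, L_m] − (n−m)·L_{n+m}`. -/
def dev (h : ℝ) (n m : ℤ) : Module.End ℂ (Polynomial ℂ) :=
  Lop h n * Lop h m - Lop h m * Lop h n - ((n - m : ℤ) : ℂ) • Lop h (n + m)

/-- The diagonal eigenvalue `a_k(j)` of the deviation `A_{k,−k}` on the monomial `z^j`. -/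
def adiag (h : ℝ) (k : ℤ) (j : ℕ) : ℂ := ((dev h k (-k)) ((X : Polynomial ℂ) ^ j)).coeff j

/-- The weight `⟨zⁿ, zⁿ⟩ = n!·(2h)(2h+1)⋯(2h+n−1)`. -/
def wgt (h : ℝ) (n : ℕ) : ℝ := (n.factorial : ℝ) * ∏ j ∈ Finset.range n, (2 * h + (j : ℝ))

/-- The inner product of the unitarizable Verma module (`h > 0`), conjugate-linear in
the first argument. -/
def ip (h : ℝ) (p q : Polynomial ℂ) : ℂ :=
  ∑ n ∈ p.support, (starRingEnd ℂ) (p.coeff n) * q.coeff n * ((wgt h n : ℝ) : ℂ)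

/-- The associated norm. -/
def nrm (h : ℝ) (p : Polynomial ℂ) : ℝ := Real.sqrt (ip h p p).re

/-- The fundamental form `α_{i,j} = ((6h²−6h+1)/6)·(j³−j)·δ_{i+j,0}`. -/
def alphaF (h : ℝ) (i j : ℤ) : ℝ :=
  if i + j = 0 then ((6 * h ^ 2 - 6 * h + 1) / 6) * ((j : ℝ) ^ 3 - (j : ℝ)) else 0

/-- The inverse fundamental form `α^{k,−k} = −1/α_{k,−k}` (for `|k| ≥ 2`). -/
def alphaInv (h : ℝ) (k : ℤ) : ℝ := -1 / alphaF h k (-k)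


/-- Any contravariant sesquilinear form `B` on the Verma module `V_h`
satisfies `B(zⁿ, zᵐ) = 0` for `n ≠ m` and `B(zⁿ, zⁿ) = n!·(2h)⋯(2h+n−1)·B(1,1)`; in
particular it is unique up to a scalar multiple. -/
theorem stmt17 (h : ℝ) (B : Polynomial ℂ → Polynomial ℂ → ℂ)
    (hadd1 : ∀ p p' q : Polynomial ℂ, B (p + p') q = B p q + B p' q)
    (hadd2 : ∀ p q q' : Polynomial ℂ, B p (q + q') = B p q + B p q')
    (hsmul1 : ∀ (c : ℂ) (p q : Polynomial ℂ), B (c • p) q = (starRingEnd ℂ) c * B p q)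
    (hsmul2 : ∀ (c : ℂ) (p q : Polynomial ℂ), B p (c • q) = c * B p q)
    (hcontra : ∀ i ∈ ({-1, 0, 1} : Set ℤ), ∀ p q : Polynomial ℂ,
      B ((lgen h i) p) q = B p ((lgen h (-i)) q)) :
    ∀ n m : ℕ,
      (n ≠ m → B ((X : Polynomial ℂ) ^ n) ((X : Polynomial ℂ) ^ m) = 0) ∧
      B ((X : Polynomial ℂ) ^ n) ((X : Polynomial ℂ) ^ n)
        = ((wgt h n : ℝ) : ℂ) * B 1 1 := by

  -- auxiliary computations
  have Xder : ∀ k : ℕ, (X : Polynomial ℂ) * derivative ((X : Polynomial ℂ)^k)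
      = (k : ℂ) • (X : Polynomial ℂ)^k := by
    intro k
    cases k with
    | zero => simp
    | succ k =>
      rw [derivative_X_pow, Nat.add_sub_cancel, Polynomial.smul_eq_C_mul]
      push_cast
      ring
  have derX : ∀ k : ℕ, derivative ((X : Polynomial ℂ)^(k+1))
      = ((k : ℂ) + 1) • (X : Polynomial ℂ)^k := by
    intro k
    rw [derivative_X_pow, Nat.add_sub_cancel, Polynomial.smul_eq_C_mul]
    push_cast
    ring
  have hder : ∀ p : Polynomial ℂ,
      ((Polynomial.derivative : Module.End ℂ (Polynomial ℂ)) p) = derivative p :=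
    fun _ => rfl
  have hl0 : ∀ k : ℕ, lgen h 0 ((X : Polynomial ℂ)^k) = ((k : ℂ) + h) • (X : Polynomial ℂ)^k := by
    intro k
    show (mulX * der + (h : ℂ) • 1) _ = _
    simp only [LinearMap.add_apply, Module.End.mul_apply, LinearMap.smul_apply,
      Module.End.one_apply, mulX, der, LinearMap.mulLeft_apply, hder]
    rw [Xder, add_smul]
  have hl1 : ∀ k : ℕ, lgen h 1 ((X : Polynomial ℂ)^(k+1))
      = (((k : ℂ) + 1) * ((k : ℂ) + 2 * h)) • (X : Polynomial ℂ)^k := by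
    intro k
    show (mulX * der * der + ((2*h : ℝ) : ℂ) • der) _ = _
    simp only [LinearMap.add_apply, Module.End.mul_apply, LinearMap.smul_apply,
      mulX, der, LinearMap.mulLeft_apply, hder]
    rw [derX, map_smul, mul_smul_comm, Xder, smul_smul, smul_smul, ← add_smul]
    congr 1
    push_cast
    ring
  have hzero : ∀ n m : ℕ, n ≠ m →
      B ((X : Polynomial ℂ)^n) ((X : Polynomial ℂ)^m) = 0 := by
    intro n m hnm
    have hc := hcontra 0 (by simp) ((X : Polynomial ℂ)^n) ((X : Polynomial ℂ)^m)
    rw [neg_zero, hl0, hl0, hsmul1, hsmul2] at hc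
    have : ((n : ℂ) - m) * B ((X : Polynomial ℂ)^n) ((X : Polynomial ℂ)^m) = 0 := by
      have hconj : (starRingEnd ℂ) ((n : ℂ) + h) = (n : ℂ) + h := by
        simp [map_add, Complex.conj_natCast, Complex.conj_ofReal]
      rw [hconj] at hc
      linear_combination hc
    rcases mul_eq_zero.mp this with h1 | h1
    · exfalso
      apply hnm
      exact_mod_cast sub_eq_zero.mp h1
    · exact h1
  have hdiag : ∀ n : ℕ, B ((X : Polynomial ℂ)^n) ((X : Polynomial ℂ)^n)
      = ((wgt h n : ℝ) : ℂ) * B 1 1 := by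
    intro n
    induction n with
    | zero => simp [wgt]
    | succ k ih =>
      have hc := hcontra (-1) (by simp) ((X : Polynomial ℂ)^k) ((X : Polynomial ℂ)^(k+1))
      have hml : lgen h (-1) ((X : Polynomial ℂ)^k) = (X : Polynomial ℂ)^(k+1) := by
        show mulX _ = _
        rw [mulX, LinearMap.mulLeft_apply, ← pow_succ']
      rw [hml, show (-(-1) : ℤ) = 1 by norm_num, hl1, hsmul2, ih] at hc
      rw [hc]
      have hwgt : ((wgt h (k+1) : ℝ) : ℂ)
          = ((k : ℂ) + 1) * ((k : ℂ) + 2 * h) * ((wgt h k : ℝ) : ℂ) := by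
        simp only [wgt, Nat.factorial_succ, Finset.prod_range_succ]
        push_cast
        ring
      rw [hwgt]
      ring
  intro n m
  exact ⟨hzero n m, hdiag n⟩
end
end

section
/- Let h ∈ ℝ. There exists a linear subspace W of ℂ[z] with {0} ≠ W ≠ ℂ[z] invariant under all three operators l_{−1}, l_0, l_1 if and only if h = −n/2 for some n ∈ ℤ≥0 (equivalently, 2h is a nonpositive integer); that is, the Verma module V_h over sl(2,ℂ) is nondegenerate (contains no proper submodule) if and only if h ≠ −n/2 for all n ∈ ℤ≥0. -/
open Polynomial

noncomputable section

lemma lgen_neg_one (h : ℝ) (p : Polynomial ℂ) : lgen h (-1) p = X * p := by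
  simp [lgen, mulX]

lemma lgen_zero (h : ℝ) (p : Polynomial ℂ) :
    lgen h 0 p = X * derivative p + (h : ℂ) • p := by
  simp [lgen, mulX, der, Module.End.mul_apply]

lemma lgen_one (h : ℝ) (p : Polynomial ℂ) :
    lgen h 1 p = X * derivative (derivative p) + ((2*h:ℝ):ℂ) • derivative p := by
  simp [lgen, mulX, der, Module.End.mul_apply]

lemma coeff_lgen_zero (h : ℝ) (p : Polynomial ℂ) (k : ℕ) :
    (lgen h 0 p).coeff k = ((k:ℂ) + h) * p.coeff k := by
  rw [lgen_zero]
  cases k with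
  | zero => simp [mul_coeff_zero]
  | succ j => simp [coeff_X_mul, coeff_derivative]; ring

lemma coeff_lgen_one (h : ℝ) (p : Polynomial ℂ) (k : ℕ) :
    (lgen h 1 p).coeff k = ((k:ℂ)+1) * ((k:ℂ) + 2*h) * p.coeff (k+1) := by
  rw [lgen_one]
  cases k with
  | zero => simp [mul_coeff_zero, coeff_derivative]
  | succ j => simp [coeff_X_mul, coeff_derivative]; ring

def lowW (n : ℕ) : Submodule ℂ (Polynomial ℂ) where
  carrier := {p | ∀ k ≤ n, p.coeff k = 0}
  add_mem' := by intro p q hp hq k hk; simp [hp k hk, hq k hk]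
  zero_mem' := by intro k _; simp
  smul_mem' := by intro c p hp k hk; simp [hp k hk]

lemma mem_lowW {n : ℕ} {p : Polynomial ℂ} : p ∈ lowW n ↔ ∀ k ≤ n, p.coeff k = 0 := Iff.rfl


/-- The Verma module `V_h` has a proper nonzero subspace invariant under
`l₋₁, l₀, l₁` if and only if `h = −n/2` for some `n ∈ ℤ≥0`. -/
theorem stmt18 (h : ℝ) :
    (∃ W : Submodule ℂ (Polynomial ℂ), W ≠ ⊥ ∧ W ≠ ⊤ ∧
      (∀ p ∈ W, (lgen h (-1)) p ∈ W) ∧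
      (∀ p ∈ W, (lgen h 0) p ∈ W) ∧
      (∀ p ∈ W, (lgen h 1) p ∈ W)) ↔
    ∃ n : ℕ, h = -(n : ℝ) / 2 := by
  constructor
  · rintro ⟨W, hbot, htop, hm1, h0, h1⟩
    by_contra hn
    push_neg at hn
    -- key fact: (k:ℂ) + 2h ≠ 0 for all k : ℕ
    have hne : ∀ k : ℕ, ((k:ℂ) + 2*(h:ℂ)) ≠ 0 := by
      intro k hk
      apply hn k
      have : ((k + 2*h : ℝ) : ℂ) = 0 := by push_cast; linear_combination hk
      have h2 : (k:ℝ) + 2*h = 0 := by exact_mod_cast this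
      linarith
    -- Step A: some monomial is in W
    have keyA : ∀ N : ℕ, ∀ p : Polynomial ℂ, p ∈ W → p ≠ 0 → p.support.card ≤ N →
        ∃ j : ℕ, (X : Polynomial ℂ)^j ∈ W := by
      intro N
      induction N with
      | zero =>
        intro p hp hp0 hc
        exact absurd (Polynomial.support_eq_empty.mp (Finset.card_eq_zero.mp (Nat.le_zero.mp hc))) hp0
      | succ N ih =>
        intro p hpW hp0 hc
        set j := p.natDegree with hjdef
        have hj : p.coeff j ≠ 0 :=
          Polynomial.mem_support_iff.mp (Polynomial.natDegree_mem_support_of_nonzero hp0)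
        set q : Polynomial ℂ := lgen h 0 p - (((j:ℂ) + h)) • p with hq
        have hqW : q ∈ W := W.sub_mem (h0 p hpW) (W.smul_mem _ hpW)
        have hqc : ∀ k : ℕ, q.coeff k = ((k:ℂ) - (j:ℂ)) * p.coeff k := by
          intro k
          simp [hq, coeff_lgen_zero]
          ring
        by_cases hq0 : q = 0
        · refine ⟨j, ?_⟩
          obtain ⟨c, hc0, hpm⟩ : ∃ c : ℂ, c ≠ 0 ∧ p = c • (X : Polynomial ℂ)^j :=
            ⟨p.coeff j, hj, by
            ext k
            rcases eq_or_ne k j with rfl | hkj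
            · simp
            · have := hqc k
              rw [hq0] at this
              simp only [coeff_zero] at this
              have hkj' : ((k:ℂ) - (j:ℂ)) ≠ 0 := by
                intro hc0
                apply hkj
                have : (k:ℂ) = (j:ℂ) := by linear_combination hc0
                exact_mod_cast this
              have : p.coeff k = 0 := by
                rcases mul_eq_zero.mp this.symm with hx | hx
                · exact absurd hx hkj'
                · exact hx
              simp [this, coeff_X_pow, hkj]⟩
          have hW2 := W.smul_mem c⁻¹ hpW
          rw [hpm, smul_smul, inv_mul_cancel₀ hc0, one_smul] at hW2
          exact hW2
        · have hjsup : j ∈ p.support := by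
            simpa [mem_support_iff] using hj
          have hsub : q.support ⊆ p.support \ {j} := by
            intro k hk
            rw [mem_support_iff] at hk
            rw [hqc k] at hk
            simp only [Finset.mem_sdiff, mem_support_iff, Finset.mem_singleton]
            constructor
            · intro hc0; exact hk (by simp [hc0])
            · intro hkj; exact hk (by simp [hkj])
          have hcard : q.support.card ≤ N := by
            have h1' : (p.support \ {j}).card = p.support.card - 1 := by
              rw [Finset.card_sdiff_of_subset (by simpa using hjsup)]
              simp
            have := Finset.card_le_card hsub
            omega
          exact ih q hqW hq0 hcard
    -- Step B: from X^j ∈ W, get 1 ∈ W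
    have keyB : ∀ j : ℕ, (X : Polynomial ℂ)^j ∈ W → (1 : Polynomial ℂ) ∈ W := by
      intro j
      induction j with
      | zero => intro hx; simpa using hx
      | succ m ih =>
        intro hx
        have hl : lgen h 1 ((X:Polynomial ℂ)^(m+1)) ∈ W := h1 _ hx
        have heq : lgen h 1 ((X:Polynomial ℂ)^(m+1))
            = (((m:ℂ)+1) * ((m:ℂ) + 2*h)) • (X:Polynomial ℂ)^m := by
          ext k
          rw [coeff_lgen_one]
          simp only [coeff_smul, coeff_X_pow, smul_eq_mul]
          rcases eq_or_ne k m with rfl | hkm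
          · simp
          · have : ¬ (k + 1 = m + 1) := by omega
            simp [hkm, this]
        have hc : (((m:ℂ)+1) * ((m:ℂ) + 2*h)) ≠ 0 := by
          apply mul_ne_zero
          · exact Nat.cast_add_one_ne_zero m
          · exact hne m
        have : (X:Polynomial ℂ)^m ∈ W := by
          have := W.smul_mem (((m:ℂ)+1) * ((m:ℂ) + 2*h))⁻¹ hl
          rwa [heq, smul_smul, inv_mul_cancel₀ hc, one_smul] at this
        exact ih this
    -- get the contradiction: W = ⊤
    obtain ⟨p, hpW, hp0⟩ := Submodule.ne_bot_iff W |>.mp hbot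
    obtain ⟨j, hXj⟩ := keyA p.support.card p hpW hp0 le_rfl
    have hone : (1 : Polynomial ℂ) ∈ W := keyB j hXj
    have hall : ∀ k : ℕ, (X : Polynomial ℂ)^k ∈ W := by
      intro k
      induction k with
      | zero => simpa using hone
      | succ m ih =>
        have := hm1 _ ih
        rwa [lgen_neg_one, ← pow_succ'] at this
    apply htop
    rw [Submodule.eq_top_iff']
    intro p
    induction p using Polynomial.induction_on' with
    | add f g hf hg => exact W.add_mem hf hg
    | monomial n a =>
      have := W.smul_mem a (hall n)
      rwa [smul_X_eq_monomial] at this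
  · rintro ⟨n, rfl⟩
    refine ⟨lowW n, ?_, ?_, ?_, ?_, ?_⟩
    · -- ≠ ⊥ : contains X^(n+1)
      intro hW
      have hmem : (X : Polynomial ℂ)^(n+1) ∈ lowW n := by
        rw [mem_lowW]
        intro k hk
        have : ¬ (k = n + 1) := by omega
        simp [coeff_X_pow, this]
      rw [hW, Submodule.mem_bot] at hmem
      exact pow_ne_zero (n+1) (Polynomial.X_ne_zero (R := ℂ)) hmem
    · -- ≠ ⊤ : missing 1
      intro hW
      have : (1 : Polynomial ℂ) ∈ lowW n := by rw [hW]; trivial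
      simpa using mem_lowW.mp this 0 (Nat.zero_le n)
    · intro p hp
      rw [mem_lowW] at hp ⊢
      intro k hk
      rw [lgen_neg_one]
      cases k with
      | zero => simp [mul_coeff_zero]
      | succ m => rw [coeff_X_mul]; exact hp m (by omega)
    · intro p hp
      rw [mem_lowW] at hp ⊢
      intro k hk
      rw [coeff_lgen_zero, hp k hk, mul_zero]
    · intro p hp
      rw [mem_lowW] at hp ⊢
      intro k hk
      rw [coeff_lgen_one]
      rcases eq_or_ne k n with rfl | hkn
      · have : (k:ℂ) + 2 * (↑(-(k:ℝ)/2) : ℂ) = 0 := by push_cast; ring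
        rw [this, mul_zero, zero_mul]
      · rw [hp (k+1) (by omega), mul_zero]
end
end
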